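/- Let ψ₁,…,ψ_m be unit vectors in ℂ^d with priors p_k ≥ 0, Σ p_k = 1, and let W₁,…,W_m > 0 be weights such that S := Σ_ℓ W_ℓ |ψ_ℓ⟩⟨ψ_ℓ| is positive definite, and let (M_k) be the associated Belavkin weighted square-root measurement. If there exists a constant c > 0 such that p_k² ⟨ψ_k, M_k ψ_k⟩ = c W_k for all k, then (M_k) is optimal: for every POVM (N_k) on ℂ^d, Σ_k p_k ⟨ψ_k, M_k ψ_k⟩ ≥ Σ_k p_k ⟨ψ_k, N_k ψ_k⟩. -/

import Mathlib

open Matrix Filter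
open scoped ComplexOrder

noncomputable section

/-- The rank-one projector `|ψ⟩⟨ψ|` as a matrix. -/
def proj {d : ℕ} (ψ : Fin d → ℂ) : Matrix (Fin d) (Fin d) ℂ := vecMulVec ψ (star ψ)

/-- The (real) expectation value `⟨ψ, M ψ⟩`. -/
def expVal {d : ℕ} (M : Matrix (Fin d) (Fin d) ℂ) (ψ : Fin d → ℂ) : ℝ :=
  (star ψ ⬝ᵥ M *ᵥ ψ).re

/-- A POVM: a finite family of PSD matrices summing to the identity. -/
def IsPOVM {d m : ℕ} (M : Fin m → Matrix (Fin d) (Fin d) ℂ) : Prop :=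
  (∀ k, (M k).PosSemidef) ∧ ∑ k, M k = 1

/-- The square root of a positive semidefinite matrix, as `Matrix.PosSemidef.sqrt` was defined in
the older Mathlib. -/
def Matrix.PosSemidef.sqrt {n : Type*} [Fintype n] [DecidableEq n] {𝕜 : Type*} [RCLike 𝕜]
    {A : Matrix n n 𝕜} (hA : A.PosSemidef) : Matrix n n 𝕜 :=
  (hA.1.eigenvectorUnitary : Matrix n n 𝕜) *
    diagonal (fun i => ((√(hA.1.eigenvalues i) : ℝ) : 𝕜)) *
    (star hA.1.eigenvectorUnitary : Matrix n n 𝕜)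

theorem Matrix.PosSemidef.sqrt_mul_self {n : Type*} [Fintype n] [DecidableEq n]
    {A : Matrix n n ℂ} (hA : A.PosSemidef) : hA.sqrt * hA.sqrt = A := by
  have hU : (star hA.1.eigenvectorUnitary : Matrix n n ℂ) *
      (hA.1.eigenvectorUnitary : Matrix n n ℂ) = 1 :=
    Unitary.coe_star_mul_self _
  have hd : diagonal (fun i => ((√(hA.1.eigenvalues i) : ℝ) : ℂ)) *
      diagonal (fun i => ((√(hA.1.eigenvalues i) : ℝ) : ℂ))
      = diagonal (RCLike.ofReal ∘ hA.1.eigenvalues) := by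
    rw [diagonal_mul_diagonal]; congr 1; ext i
    simp only [Function.comp_apply, ← Complex.ofReal_mul,
      Real.mul_self_sqrt (hA.eigenvalues_nonneg i)]
    rfl
  conv_rhs => rw [hA.1.spectral_theorem]
  rw [Unitary.conjStarAlgAut_apply, ← hd]
  simp only [Matrix.PosSemidef.sqrt, Matrix.mul_assoc]
  rw [← Matrix.mul_assoc (star hA.1.eigenvectorUnitary : Matrix n n ℂ)
    (hA.1.eigenvectorUnitary : Matrix n n ℂ), hU, Matrix.one_mul]
  rfl

theorem Matrix.PosSemidef.posSemidef_sqrt {n : Type*} [Fintype n] [DecidableEq n]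
    {A : Matrix n n ℂ} (hA : A.PosSemidef) : hA.sqrt.PosSemidef := by
  have hD : (diagonal (fun i => ((√(hA.1.eigenvalues i) : ℝ) : ℂ))).PosSemidef :=
    Matrix.posSemidef_diagonal_iff.mpr fun i => Complex.zero_le_real.mpr (Real.sqrt_nonneg _)
  have := hD.conjTranspose_mul_mul_same (star hA.1.eigenvectorUnitary : Matrix n n ℂ)
  simpa [Matrix.PosSemidef.sqrt, Unitary.coe_star, Matrix.star_eq_conjTranspose] using this

section Aux
variable {d : ℕ}

lemma aux_vecMulVec_mulVec (u v x : Fin d → ℂ) : vecMulVec u v *ᵥ x = (v ⬝ᵥ x) • u := by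
  ext i
  simp only [mulVec, vecMulVec_apply, dotProduct, Pi.smul_apply, smul_eq_mul,
    Finset.sum_mul, Finset.mul_sum]
  congr 1; ext j; ring

lemma aux_trace_mul_vecMulVec (A : Matrix (Fin d) (Fin d) ℂ) (u : Fin d → ℂ) :
    trace (A * vecMulVec u (star u)) = star u ⬝ᵥ (A *ᵥ u) := by
  simp only [trace, Matrix.mul_apply, vecMulVec_apply, dotProduct, mulVec, diag,
    Finset.mul_sum, Pi.star_apply]
  congr 1; ext i; congr 1; ext j; ring

lemma aux_cauchy_schwarz (u v : Fin d → ℂ) :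
    Complex.normSq (star u ⬝ᵥ v) ≤ (star u ⬝ᵥ u).re * (star v ⬝ᵥ v).re := by
  set u' : EuclideanSpace ℂ (Fin d) := (WithLp.equiv 2 _).symm u with hu'
  set v' : EuclideanSpace ℂ (Fin d) := (WithLp.equiv 2 _).symm v with hv'
  have h1 : (inner ℂ u' v' : ℂ) = star u ⬝ᵥ v := by rw [dotProduct_comm]; rfl
  have h2 : (inner ℂ u' u' : ℂ) = star u ⬝ᵥ u := by rw [dotProduct_comm]; rfl
  have h3 : (inner ℂ v' v' : ℂ) = star v ⬝ᵥ v := by rw [dotProduct_comm]; rfl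
  have h := norm_inner_le_norm (𝕜 := ℂ) u' v'
  have hmul := mul_self_le_mul_self (norm_nonneg (inner ℂ u' v' : ℂ)) h
  rw [h1] at hmul
  have hu : ‖u'‖ * ‖u'‖ = (inner ℂ u' u' : ℂ).re := by
    rw [← inner_self_eq_norm_mul_norm (𝕜 := ℂ)]; rfl
  have hv : ‖v'‖ * ‖v'‖ = (inner ℂ v' v' : ℂ).re := by
    rw [← inner_self_eq_norm_mul_norm (𝕜 := ℂ)]; rfl
  calc Complex.normSq (star u ⬝ᵥ v) = ‖star u ⬝ᵥ v‖ * ‖star u ⬝ᵥ v‖ := by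
        rw [Complex.normSq_eq_norm_sq, sq]
    _ ≤ (‖u'‖ * ‖v'‖) * (‖u'‖ * ‖v'‖) := hmul
    _ = (star u ⬝ᵥ u).re * (star v ⬝ᵥ v).re := by
        rw [← h2, ← h3, ← hu, ← hv]; ring

lemma aux_sqrt_posDef {A : Matrix (Fin d) (Fin d) ℂ} (hA : A.PosDef) :
    hA.posSemidef.sqrt.PosDef := by
  set R := hA.posSemidef.sqrt with hR
  have hRpsd : R.PosSemidef := hA.posSemidef.posSemidef_sqrt
  have hdet : R.det ≠ 0 := by
    intro h
    have : A.det = 0 := by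
      rw [← hA.posSemidef.sqrt_mul_self, det_mul, ← hR, h, mul_zero]
    exact (ne_of_gt hA.det_pos) this
  refine Matrix.PosDef.of_dotProduct_mulVec_pos hRpsd.1 fun x hx => ?_
  have hle := hRpsd.dotProduct_mulVec_nonneg x
  rcases lt_or_eq_of_le hle with h | h
  · exact h
  · exfalso
    have h0 : R *ᵥ x = 0 := (hRpsd.dotProduct_mulVec_zero_iff x).mp h.symm
    have : x = 0 := by
      have hinv := Matrix.nonsing_inv_mul R (isUnit_iff_ne_zero.mpr hdet)
      have := congrArg (fun v => R⁻¹ *ᵥ v) h0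
      simpa [Matrix.mulVec_mulVec, hinv] using this
    exact hx this

lemma aux_diag_nonneg {A : Matrix (Fin d) (Fin d) ℂ} (hA : A.PosSemidef) (i : Fin d) :
    0 ≤ A i i := by
  have := hA.dotProduct_mulVec_nonneg (Pi.single i 1)
  simpa [mulVec_single, dotProduct_single, Pi.single_apply, dotProduct] using this

lemma aux_trace_nonneg {A : Matrix (Fin d) (Fin d) ℂ} (hA : A.PosSemidef) : 0 ≤ A.trace :=
  Finset.sum_nonneg fun i _ => aux_diag_nonneg hA i

lemma aux_trace_mul_nonneg {A B : Matrix (Fin d) (Fin d) ℂ} (hA : A.PosSemidef)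
    (hB : B.PosSemidef) : 0 ≤ (A * B).trace := by
  set R := hB.sqrt with hR
  have hRR : R * R = B := hB.sqrt_mul_self
  have h1 : (A * B).trace = (R * A * R).trace := by
    rw [← hRR, ← Matrix.mul_assoc, trace_mul_cycle]
  rw [h1]
  have : (R * A * R).PosSemidef := by
    have := hA.conjTranspose_mul_mul_same R
    rwa [hB.posSemidef_sqrt.1] at this
  exact aux_trace_nonneg this

lemma aux_smul_herm {A : Matrix (Fin d) (Fin d) ℂ} (r : ℝ) (hA : A.IsHermitian) :
    (r • A).IsHermitian := by
  have : (r • A)ᴴ = r • Aᴴ := by ext i j; simp [conjTranspose_apply, star_smul]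
  rw [IsHermitian, this, hA.eq]

lemma aux_proj_herm (ψ : Fin d → ℂ) : (proj ψ).IsHermitian := by
  ext i j
  simp [proj, conjTranspose_apply, vecMulVec_apply, mul_comm]

lemma aux_key_psd {T : Matrix (Fin d) (Fin d) ℂ} (hT : T.PosDef) (ψ : Fin d → ℂ) (r s : ℝ)
    (hr : 0 ≤ r) (hs : r * (star ψ ⬝ᵥ T⁻¹ *ᵥ ψ).re ≤ s) :
    (s • T - r • proj ψ).PosSemidef := by
  set R := hT.posSemidef.sqrt with hR
  have hRpd : R.PosDef := aux_sqrt_posDef hT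
  have hRH : Rᴴ = R := hRpd.1
  have hRiH : (R⁻¹)ᴴ = R⁻¹ := hRpd.inv.1
  have hRR : R * R = T := hT.posSemidef.sqrt_mul_self
  have hdet : IsUnit R.det := hRpd.isUnit.map detMonoidHom
  have hinv : R⁻¹ * R = 1 := nonsing_inv_mul R hdet
  have hTinv : T⁻¹ = R⁻¹ * R⁻¹ := by rw [← hRR, Matrix.mul_inv_rev]
  refine Matrix.PosSemidef.of_dotProduct_mulVec_nonneg ?_ ?_
  · exact (aux_smul_herm s hT.1).sub (aux_smul_herm r (aux_proj_herm ψ))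
  · intro x
    set u := R⁻¹ *ᵥ ψ with hu
    set v := R *ᵥ x with hv
    set w := star ψ ⬝ᵥ x with hw
    have suv : star u ⬝ᵥ v = w := by
      rw [hu, hv, star_mulVec, hRiH, ← dotProduct_mulVec, mulVec_mulVec, hinv, one_mulVec]
    have suu : star u ⬝ᵥ u = star ψ ⬝ᵥ T⁻¹ *ᵥ ψ := by
      rw [hu, star_mulVec, hRiH, ← dotProduct_mulVec, mulVec_mulVec, hTinv]
    have svv : star v ⬝ᵥ v = star x ⬝ᵥ T *ᵥ x := by
      rw [hv, star_mulVec, hRH, ← dotProduct_mulVec, mulVec_mulVec, hRR]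
    set q := star x ⬝ᵥ T *ᵥ x with hq
    have hq0 : 0 ≤ q := hT.posSemidef.dotProduct_mulVec_nonneg x
    have him : q.im = 0 := by
      rw [Complex.le_def] at hq0
      simpa using hq0.2.symm
    have hqre : (q.re : ℂ) = q := Complex.ext rfl (by simp [him])
    have hqre0 : 0 ≤ q.re := by rw [Complex.le_def] at hq0; simpa using hq0.1
    have hform : star x ⬝ᵥ (s • T - r • proj ψ) *ᵥ x
        = ((s * q.re - r * Complex.normSq w : ℝ) : ℂ) := by
      rw [sub_mulVec, dotProduct_sub]
      have h1 : star x ⬝ᵥ (s • T) *ᵥ x = (s : ℂ) * q := by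
        rw [smul_mulVec, dotProduct_smul]
        simp [Complex.real_smul]
        exact Or.inl hq.symm
      have hxpsi : star x ⬝ᵥ ψ = star w := by rw [hw, star_dotProduct]
      have h2 : star x ⬝ᵥ (r • proj ψ) *ᵥ x = (r : ℂ) * Complex.normSq w := by
        rw [smul_mulVec, dotProduct_smul, proj, aux_vecMulVec_mulVec,
          dotProduct_smul, hxpsi]
        simp only [smul_eq_mul, Complex.real_smul]
        congr 1
        simp only [Complex.star_def]
        exact Complex.mul_conj w
      rw [h1, h2]
      conv_lhs => rw [← hqre]
      push_cast
      ring
    rw [hform, Complex.zero_le_real]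
    have hcs := aux_cauchy_schwarz u v
    rw [suv, suu, svv] at hcs
    nlinarith [Complex.normSq_nonneg w, hqre0]

end Aux

/-- optimality condition for positively-weighted measurements: if there is a
constant `c > 0` with `p k ^ 2 * ⟨ψ k, M k ψ k⟩ = c * W k` for all `k`, then the Belavkin
weighted square-root measurement with weights `W k > 0` is optimal. -/
theorem weighted_condition_implies_optimal {d m : ℕ}
    (ψ : Fin m → Fin d → ℂ) (hψ : ∀ k, star (ψ k) ⬝ᵥ ψ k = 1)
    (p : Fin m → ℝ) (hp : ∀ k, 0 ≤ p k) (hp1 : ∑ k, p k = 1)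
    (W : Fin m → ℝ) (hW : ∀ k, 0 < W k)
    (hS : (∑ ℓ, W ℓ • proj (ψ ℓ)).PosDef)
    (M : Fin m → Matrix (Fin d) (Fin d) ℂ)
    (hM : ∀ k, M k = (hS.posSemidef.sqrt)⁻¹ * (W k • proj (ψ k)) * (hS.posSemidef.sqrt)⁻¹)
    (c : ℝ) (hc : 0 < c)
    (hcond : ∀ k, p k ^ 2 * expVal (M k) (ψ k) = c * W k) :
    ∀ N : Fin m → Matrix (Fin d) (Fin d) ℂ, IsPOVM N →
      ∑ k, p k * expVal (N k) (ψ k) ≤ ∑ k, p k * expVal (M k) (ψ k) := by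
  intro N hN
  set T := hS.posSemidef.sqrt with hT
  have hTpd : T.PosDef := aux_sqrt_posDef hS
  have hTinvpd : T⁻¹.PosDef := hTpd.inv
  -- a k is real and positive
  have hψne : ∀ k, ψ k ≠ 0 := by
    intro k h
    have := hψ k
    rw [h] at this
    simp at this
  have hare_pos : ∀ k, 0 < (star (ψ k) ⬝ᵥ T⁻¹ *ᵥ ψ k).re :=
    fun k => by simpa using (Complex.lt_def.mp (hTinvpd.dotProduct_mulVec_pos (hψne k))).1
  have haim : ∀ k, (((star (ψ k) ⬝ᵥ T⁻¹ *ᵥ ψ k).re : ℝ) : ℂ) = star (ψ k) ⬝ᵥ T⁻¹ *ᵥ ψ k := by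
    intro k
    have h0 : 0 ≤ star (ψ k) ⬝ᵥ T⁻¹ *ᵥ ψ k := hTinvpd.posSemidef.dotProduct_mulVec_nonneg (ψ k)
    rw [Complex.le_def] at h0
    have him : (star (ψ k) ⬝ᵥ T⁻¹ *ᵥ ψ k).im = 0 := by simpa using h0.2.symm
    exact Complex.ext rfl (by simp [him])
  -- expVal (M k) (ψ k) = W k * (a k).re ^ 2
  have hexp : ∀ k, expVal (M k) (ψ k) = W k * (star (ψ k) ⬝ᵥ T⁻¹ *ᵥ ψ k).re ^ 2 := by
    intro k
    rw [expVal, hM k]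
    have hstep : star (ψ k) ⬝ᵥ (T⁻¹ * (W k • proj (ψ k)) * T⁻¹) *ᵥ ψ k
        = ((W k * (star (ψ k) ⬝ᵥ T⁻¹ *ᵥ ψ k).re ^ 2 : ℝ) : ℂ) := by
      rw [← Matrix.mulVec_mulVec, ← Matrix.mulVec_mulVec, smul_mulVec, proj,
        aux_vecMulVec_mulVec]
      rw [mulVec_smul, mulVec_smul, dotProduct_smul, dotProduct_smul]
      conv_lhs => rw [← haim k]
      simp only [smul_eq_mul, Complex.real_smul]
      push_cast
      ring
    rw [hstep, Complex.ofReal_re]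
  -- the constant κ = √c
  set κ := Real.sqrt c with hκdef
  have hκpos : 0 < κ := Real.sqrt_pos.mpr hc
  have hκ : ∀ k, p k * (star (ψ k) ⬝ᵥ T⁻¹ *ᵥ ψ k).re = κ := by
    intro k
    have h := hcond k
    rw [hexp k] at h
    have hsq : (p k * (star (ψ k) ⬝ᵥ T⁻¹ *ᵥ ψ k).re) ^ 2 = c := by
      have hWne : W k ≠ 0 := (hW k).ne'
      have h2 : (p k * (star (ψ k) ⬝ᵥ T⁻¹ *ᵥ ψ k).re) ^ 2 * W k = c * W k := by
        ring_nf
        ring_nf at h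
        linarith
      exact mul_right_cancel₀ hWne h2
    have hnn : 0 ≤ p k * (star (ψ k) ⬝ᵥ T⁻¹ *ᵥ ψ k).re :=
      mul_nonneg (hp k) (hare_pos k).le
    rw [hκdef, ← hsq, Real.sqrt_sq hnn]
  have hpsd : ∀ k, (κ • T - p k • proj (ψ k)).PosSemidef := fun k =>
    aux_key_psd hTpd (ψ k) (p k) κ (hp k) (le_of_eq (hκ k))
  -- rewrite both sides via traces
  have htr : ∀ (A : Matrix (Fin d) (Fin d) ℂ) k,
      ((p k • proj (ψ k)) * A).trace = (p k : ℂ) * (star (ψ k) ⬝ᵥ A *ᵥ ψ k) := by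
    intro A k
    rw [smul_mul_assoc, trace_smul, trace_mul_comm, proj, aux_trace_mul_vecMulVec]
    simp [Complex.real_smul]
  -- upper bound each term for N
  have hstep1 : ∀ k, p k * expVal (N k) (ψ k) ≤ ((κ • T) * N k).trace.re := by
    intro k
    have h0 : 0 ≤ (((κ • T - p k • proj (ψ k))) * N k).trace :=
      aux_trace_mul_nonneg (hpsd k) (hN.1 k)
    rw [sub_mul, trace_sub] at h0
    rw [Complex.le_def] at h0
    have h1 : (((p k • proj (ψ k)) * N k).trace).re ≤ ((κ • T) * N k).trace.re := by
      have := h0.1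
      simp only [Complex.zero_re, Complex.sub_re] at this
      linarith
    have h2 : (((p k • proj (ψ k)) * N k).trace).re = p k * expVal (N k) (ψ k) := by
      rw [htr (N k) k, expVal, Complex.re_ofReal_mul]
    linarith
  -- sum of upper bounds equals trace (κ • T)
  have hsum : ∑ k, ((κ • T) * N k).trace.re = ((κ • T).trace).re := by
    have : ∑ k, ((κ • T) * N k).trace = (κ • T).trace := by
      rw [← trace_sum, ← Finset.mul_sum, hN.2, mul_one]
    rw [← this]
    simp [Complex.re_sum]
  -- trace (κ • T) equals the success probability of M
  have hdetT : IsUnit T.det := hTpd.isUnit.map detMonoidHom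
  have hTS : T * T = ∑ ℓ, W ℓ • proj (ψ ℓ) := hS.posSemidef.sqrt_mul_self
  have hTtr : T.trace = ∑ ℓ, (W ℓ : ℂ) * (star (ψ ℓ) ⬝ᵥ T⁻¹ *ᵥ ψ ℓ) := by
    have hTeq : T = T⁻¹ * (T * T) := by
      rw [← Matrix.mul_assoc, nonsing_inv_mul T hdetT, one_mul]
    conv_lhs => rw [hTeq, hTS]
    rw [Finset.mul_sum, trace_sum]
    congr 1; ext ℓ
    rw [mul_smul_comm, trace_smul, proj, aux_trace_mul_vecMulVec]
    simp [Complex.real_smul]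
  have hfinal : ((κ • T).trace).re = ∑ k, p k * expVal (M k) (ψ k) := by
    rw [trace_smul, hTtr]
    rw [Finset.smul_sum]
    rw [Complex.re_sum]
    congr 1; ext k
    rw [hexp k]
    have : (κ • ((W k : ℂ) * (star (ψ k) ⬝ᵥ T⁻¹ *ᵥ ψ k))).re
        = κ * (W k * (star (ψ k) ⬝ᵥ T⁻¹ *ᵥ ψ k).re) := by
      simp [Complex.real_smul, Complex.re_ofReal_mul, mul_assoc]
    rw [this, ← hκ k]
    ring
  calc ∑ k, p k * expVal (N k) (ψ k) ≤ ∑ k, ((κ • T) * N k).trace.re :=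
        Finset.sum_le_sum fun k _ => hstep1 k
    _ = ((κ • T).trace).re := hsum
    _ = ∑ k, p k * expVal (M k) (ψ k) := hfinal
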